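/- (Fixed-time Harrell's C-index in the absence of truncation bias dependence.) Fix t ∈ [0, ∞) and assume P(T_1 < T_2, T_1 < min(D_1, D_2)) > 0. For n ≥ 2 define Ĉ^{har}_n(t) = [Σ_{1≤i≠j≤n} 1{T_i < D_i}·1{S(t; Z_i) < S(t; Z_j)}·1{T_i < X_j}] / [Σ_{1≤i≠j≤n} 1{T_i < D_i}·1{T_i < X_j}]. Then, as n → ∞, Ĉ^{har}_n(t) converges in probability to P(S(t; Z_1) < S(t; Z_2), T_1 < T_2, T_1 < min(D_1, D_2)) / P(T_1 < T_2, T_1 < min(D_1, D_2)). -/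

import Mathlib

open MeasureTheory ProbabilityTheory Filter Topology
open scoped Classical

set_option linter.unusedSectionVars false
set_option maxHeartbeats 1000000

section CIndexAux

variable {Ω : Type*} [MeasurableSpace Ω] {P : Measure Ω} [IsProbabilityMeasure P]

lemma my_tendstoInMeasure_div {f g : ℕ → Ω → ℝ} {a b : ℝ}
    (hf : TendstoInMeasure P f atTop (fun _ => a))
    (hg : TendstoInMeasure P g atTop (fun _ => b)) (hb : b ≠ 0) :
    TendstoInMeasure P (fun n ω => f n ω / g n ω) atTop (fun _ => a / b) := by
  rw [tendstoInMeasure_iff_dist] at hf hg ⊢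
  intro ε hε
  have hcont : ContinuousAt (fun p : ℝ × ℝ => p.1 / p.2) (a, b) :=
    ContinuousAt.div continuousAt_fst continuousAt_snd hb
  obtain ⟨δ, hδpos, hδ⟩ := Metric.continuousAt_iff.mp hcont ε hε
  have hsub : ∀ n, {ω | ε ≤ dist (f n ω / g n ω) (a / b)} ⊆
      {ω | δ/2 ≤ dist (f n ω) a} ∪ {ω | δ/2 ≤ dist (g n ω) b} := by
    intro n ω hω
    by_contra hc
    simp only [Set.mem_union, Set.mem_setOf_eq, not_or, not_le] at hc
    have hlt : dist ((f n ω, g n ω) : ℝ × ℝ) (a, b) < δ := by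
      rw [Prod.dist_eq]
      exact max_lt (lt_of_lt_of_le hc.1 (by linarith)) (lt_of_lt_of_le hc.2 (by linarith))
    exact absurd (hδ hlt) (not_lt.mpr hω)
  have h1 := hf (δ/2) (by positivity)
  have h2 := hg (δ/2) (by positivity)
  have hle : ∀ n, P {ω | ε ≤ dist (f n ω / g n ω) (a / b)}
      ≤ P {ω | δ/2 ≤ dist (f n ω) a} + P {ω | δ/2 ≤ dist (g n ω) b} :=
    fun n => le_trans (measure_mono (hsub n)) (measure_union_le _ _)
  have hsum : Tendsto
      (fun n => P {ω | δ/2 ≤ dist (f n ω) a} + P {ω | δ/2 ≤ dist (g n ω) b})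
      atTop (𝓝 0) := by
    simpa using Filter.Tendsto.add h1 h2
  exact tendsto_of_tendsto_of_tendsto_of_le_of_le tendsto_const_nhds hsum
    (fun n => bot_le) hle

lemma my_double_sum_offDiag (n : ℕ) (Cnd : ℕ → ℕ → Prop) :
    ∑ i ∈ Finset.range n, ∑ j ∈ Finset.range n, (if i ≠ j ∧ Cnd i j then (1:ℝ) else 0)
      = ∑ p ∈ (Finset.range n).offDiag, (if Cnd p.1 p.2 then (1:ℝ) else 0) := by
  rw [← Finset.sum_product']
  rw [(show (Finset.range n).offDiag = (Finset.range n ×ˢ Finset.range n).filter (fun a : ℕ × ℕ => a.1 ≠ a.2) by ext x; simp [Finset.mem_offDiag, and_assoc]), Finset.sum_filter]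
  apply Finset.sum_congr rfl
  intro p _
  by_cases h : p.1 = p.2 <;> by_cases h2 : Cnd p.1 p.2 <;> simp [h, h2]


lemma my_integrable_of_bounded {f : Ω → ℝ} (hf : Measurable f) (C : ℝ) (hC : ∀ ω, |f ω| ≤ C) :
    Integrable f P :=
  (integrable_const C).mono' hf.aestronglyMeasurable (Filter.Eventually.of_forall hC)

lemma my_ustat_tendstoInMeasure {α : Type*} [MeasurableSpace α]
    (X : ℕ → Ω → α) (hX : ∀ i, Measurable (X i))
    (hident : ∀ i, P.map (X i) = P.map (X 0))
    (hindep : iIndepFun X P)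
    (g : α × α → ℝ) (hg : Measurable g) (hg0 : ∀ p, 0 ≤ g p) (hg1 : ∀ p, g p ≤ 1) :
    TendstoInMeasure P
      (fun n ω => (∑ p ∈ (Finset.range n).offDiag, g (X p.1 ω, X p.2 ω))
        / ((n : ℝ) * ((n : ℝ) - 1)))
      atTop (fun _ => ∫ ω, g (X 0 ω, X 1 ω) ∂P) := by
  set μ : ℝ := ∫ ω, g (X 0 ω, X 1 ω) ∂P with hμdef
  have hpm : ∀ i j : ℕ, Measurable (fun ω => g (X i ω, X j ω)) :=
    fun i j => hg.comp ((hX i).prodMk (hX j))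
  have hint : ∀ i j : ℕ, Integrable (fun ω => g (X i ω, X j ω)) P :=
    fun i j => my_integrable_of_bounded (hpm i j) 1
      (fun ω => abs_le.mpr ⟨by linarith [hg0 (X i ω, X j ω)], hg1 _⟩)
  -- the mean of each pair term is μ
  have maps : ∀ i j : ℕ, i ≠ j →
      P.map (fun ω => (X i ω, X j ω)) = (P.map (X 0)).prod (P.map (X 0)) := by
    intro i j hij
    have h1 := (indepFun_iff_map_prod_eq_prod_map_map (hX i).aemeasurable
      (hX j).aemeasurable).mp (hindep.indepFun hij)
    rw [h1, hident i, hident j]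
  have key : ∀ i j : ℕ, i ≠ j → ∫ ω, g (X i ω, X j ω) ∂P = μ := by
    intro i j hij
    have e1 : ∫ ω, g (X i ω, X j ω) ∂P
        = ∫ p, g p ∂((P.map (X 0)).prod (P.map (X 0))) := by
      rw [← maps i j hij,
        integral_map ((hX i).prodMk (hX j)).aemeasurable hg.aestronglyMeasurable]
    have e2 : μ = ∫ p, g p ∂((P.map (X 0)).prod (P.map (X 0))) := by
      rw [hμdef, ← maps 0 1 zero_ne_one,
        integral_map ((hX 0).prodMk (hX 1)).aemeasurable hg.aestronglyMeasurable]
    rw [e1, ← e2]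
  have hμ0 : 0 ≤ μ := integral_nonneg (fun ω => hg0 _)
  have hμ1 : μ ≤ 1 := by
    have := integral_mono (hint 0 1) (integrable_const (1:ℝ)) (fun ω => hg1 _)
    simpa using this
  -- centered kernel
  set h : ℕ × ℕ → Ω → ℝ := fun p ω => g (X p.1 ω, X p.2 ω) - μ with hhdef
  have hmeash : ∀ p : ℕ × ℕ, Measurable (h p) := fun p => (hpm p.1 p.2).sub measurable_const
  have habs : ∀ (p : ℕ × ℕ) (ω : Ω), |h p ω| ≤ 1 := by
    intro p ω
    have h1 := hg0 (X p.1 ω, X p.2 ω); have h2 := hg1 (X p.1 ω, X p.2 ω)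
    rw [hhdef]; dsimp only; rw [abs_le]; constructor <;> linarith
  have hinth : ∀ p : ℕ × ℕ, Integrable (h p) P :=
    fun p => my_integrable_of_bounded (hmeash p) 1 (habs p)
  have hEh : ∀ p : ℕ × ℕ, p.1 ≠ p.2 → ∫ ω, h p ω ∂P = 0 := by
    intro p hp
    rw [hhdef]
    rw [integral_sub (hint p.1 p.2) (integrable_const μ), key p.1 p.2 hp, integral_const]
    simp
  have hinthh : ∀ p q : ℕ × ℕ, Integrable (fun ω => h p ω * h q ω) P := by
    intro p q
    refine my_integrable_of_bounded ((hmeash p).mul (hmeash q)) 1 (fun ω => ?_)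
    rw [abs_mul]
    exact mul_le_one₀ (habs p ω) (abs_nonneg _) (habs q ω)
  have hcov0 : ∀ p q : ℕ × ℕ, p.1 ≠ p.2 → q.1 ≠ q.2 →
      p.1 ≠ q.1 → p.1 ≠ q.2 → p.2 ≠ q.1 → p.2 ≠ q.2 →
      ∫ ω, h p ω * h q ω ∂P = 0 := by
    intro p q hp hq h11 h12 h21 h22
    have hi : IndepFun (fun ω => (X p.1 ω, X p.2 ω)) (fun ω => (X q.1 ω, X q.2 ω)) P :=
      hindep.indepFun_prodMk_prodMk hX p.1 p.2 q.1 q.2 h11 h12 h21 h22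
    have hφ : Measurable (fun z : α × α => g z - μ) := hg.sub measurable_const
    have hi' : IndepFun (h p) (h q) P := hi.comp hφ hφ
    have hgoal : ∫ ω, h p ω * h q ω ∂P = (∫ ω, h p ω ∂P) * ∫ ω, h q ω ∂P :=
      hi'.integral_fun_mul_eq_mul_integral (hinth p).aestronglyMeasurable (hinth q).aestronglyMeasurable
    rw [hgoal, hEh p hp, zero_mul]
  have hcovb : ∀ p q : ℕ × ℕ, ∫ ω, h p ω * h q ω ∂P ≤ 1 := by
    intro p q
    have h1 : ∫ ω, h p ω * h q ω ∂P ≤ ∫ (_ : Ω), (1:ℝ) ∂P := by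
      refine integral_mono (hinthh p q) (integrable_const 1) (fun ω => ?_)
      calc h p ω * h q ω ≤ |h p ω * h q ω| := le_abs_self _
        _ ≤ 1 := by rw [abs_mul]; exact mul_le_one₀ (habs p ω) (abs_nonneg _) (habs q ω)
    simpa using h1
  -- variance bound
  have hvar : ∀ n : ℕ,
      ∫ ω, (∑ p ∈ (Finset.range n).offDiag, h p ω)^2 ∂P ≤ 4 * (n:ℝ)^3 := by
    intro n
    set s := (Finset.range n).offDiag with hs
    have hexp : ∀ ω : Ω, (∑ p ∈ s, h p ω)^2 = ∑ p ∈ s, ∑ q ∈ s, h p ω * h q ω := by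
      intro ω
      rw [sq, Finset.sum_mul_sum]
    have hswap : ∫ ω, (∑ p ∈ s, h p ω)^2 ∂P
        = ∑ p ∈ s, ∑ q ∈ s, ∫ ω, h p ω * h q ω ∂P := by
      simp_rw [hexp]
      rw [integral_finset_sum s (fun p _ => integrable_finset_sum s (fun q _ => hinthh p q))]
      exact Finset.sum_congr rfl fun p _ =>
        integral_finset_sum s (fun q _ => hinthh p q)
    rw [hswap]
    have hrow : ∀ p ∈ s, ∑ q ∈ s, ∫ ω, h p ω * h q ω ∂P ≤ 4 * (n:ℝ) := by
      intro p hp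
      obtain ⟨hp1, hp2, hpne⟩ := Finset.mem_offDiag.mp hp
      have hfilter : ∑ q ∈ s.filter
            (fun q => q.1 = p.1 ∨ q.1 = p.2 ∨ q.2 = p.1 ∨ q.2 = p.2),
            ∫ ω, h p ω * h q ω ∂P
          = ∑ q ∈ s, ∫ ω, h p ω * h q ω ∂P := by
        refine Finset.sum_filter_of_ne (fun q hq hne => ?_)
        obtain ⟨hq1, hq2, hqne⟩ := Finset.mem_offDiag.mp hq
        by_contra hnb
        push_neg at hnb
        obtain ⟨b1, b2, b3, b4⟩ := hnb
        exact hne (hcov0 p q hpne hqne (Ne.symm b1) (Ne.symm b3) (Ne.symm b2) (Ne.symm b4))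
      have hcard : (s.filter
            (fun q => q.1 = p.1 ∨ q.1 = p.2 ∨ q.2 = p.1 ∨ q.2 = p.2)).card ≤ 4 * n := by
        have hsubset : s.filter
              (fun q => q.1 = p.1 ∨ q.1 = p.2 ∨ q.2 = p.1 ∨ q.2 = p.2) ⊆
            (({p.1, p.2} : Finset ℕ) ×ˢ Finset.range n) ∪
              (Finset.range n ×ˢ ({p.1, p.2} : Finset ℕ)) := by
          intro q hq
          obtain ⟨hqs, hqb⟩ := Finset.mem_filter.mp hq
          obtain ⟨hq1, hq2, _⟩ := Finset.mem_offDiag.mp hqs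
          rcases hqb with h' | h' | h' | h'
          · exact Finset.mem_union_left _ (Finset.mem_product.mpr ⟨by simp [h'], hq2⟩)
          · exact Finset.mem_union_left _ (Finset.mem_product.mpr ⟨by simp [h'], hq2⟩)
          · exact Finset.mem_union_right _ (Finset.mem_product.mpr ⟨hq1, by simp [h']⟩)
          · exact Finset.mem_union_right _ (Finset.mem_product.mpr ⟨hq1, by simp [h']⟩)
        calc (s.filter (fun q => q.1 = p.1 ∨ q.1 = p.2 ∨ q.2 = p.1 ∨ q.2 = p.2)).card
            ≤ ((({p.1, p.2} : Finset ℕ) ×ˢ Finset.range n) ∪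
              (Finset.range n ×ˢ ({p.1, p.2} : Finset ℕ))).card :=
              Finset.card_le_card hsubset
          _ ≤ (({p.1, p.2} : Finset ℕ) ×ˢ Finset.range n).card
              + (Finset.range n ×ˢ ({p.1, p.2} : Finset ℕ)).card := Finset.card_union_le _ _
          _ ≤ 2 * n + n * 2 := by
              rw [Finset.card_product, Finset.card_product, Finset.card_range]
              have h2 : ({p.1, p.2} : Finset ℕ).card ≤ 2 :=
                le_trans (Finset.card_insert_le _ _) (by simp)
              exact add_le_add (Nat.mul_le_mul_right n h2) (Nat.mul_le_mul_left n h2)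
          _ = 4 * n := by ring
      calc ∑ q ∈ s, ∫ ω, h p ω * h q ω ∂P
          = ∑ q ∈ s.filter (fun q => q.1 = p.1 ∨ q.1 = p.2 ∨ q.2 = p.1 ∨ q.2 = p.2),
              ∫ ω, h p ω * h q ω ∂P := hfilter.symm
        _ ≤ ∑ _q ∈ s.filter (fun q => q.1 = p.1 ∨ q.1 = p.2 ∨ q.2 = p.1 ∨ q.2 = p.2),
              (1:ℝ) := Finset.sum_le_sum (fun q _ => hcovb p q)
        _ = ((s.filter (fun q => q.1 = p.1 ∨ q.1 = p.2 ∨ q.2 = p.1 ∨ q.2 = p.2)).card : ℝ) :=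
            by simp
        _ ≤ ((4 * n : ℕ) : ℝ) := by exact_mod_cast hcard
        _ = 4 * (n:ℝ) := by push_cast; ring
    calc ∑ p ∈ s, ∑ q ∈ s, ∫ ω, h p ω * h q ω ∂P
        ≤ ∑ _p ∈ s, 4 * (n:ℝ) := Finset.sum_le_sum hrow
      _ = (s.card : ℝ) * (4 * n) := by rw [Finset.sum_const, nsmul_eq_mul]
      _ ≤ (n:ℝ)^2 * (4 * n) := by
          have h1 : s.card ≤ n^2 := by
            have h2 : s.card ≤ (Finset.range n ×ˢ Finset.range n).card :=
              Finset.card_le_card (fun x hx => Finset.mem_product.mpr ⟨(Finset.mem_offDiag.mp hx).1, (Finset.mem_offDiag.mp hx).2.1⟩)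
            simpa [Finset.card_product, sq] using h2
          have hn : (s.card : ℝ) ≤ (n:ℝ)^2 := by exact_mod_cast h1
          have h4n : (0:ℝ) ≤ 4 * n := by positivity
          nlinarith
      _ = 4 * (n:ℝ)^3 := by ring
  -- Chebyshev
  rw [tendstoInMeasure_iff_dist]
  intro ε hε
  have hbound : ∀ n : ℕ, 2 ≤ n →
      (P {ω | ε ≤ dist ((∑ p ∈ (Finset.range n).offDiag, g (X p.1 ω, X p.2 ω))
          / ((n : ℝ) * ((n : ℝ) - 1))) μ}).toReal ≤ 16 / (ε^2 * n) := by
    intro n hn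
    have hn2 : (2:ℝ) ≤ (n:ℝ) := by exact_mod_cast hn
    set s := (Finset.range n).offDiag with hs
    have hc0 : (0:ℝ) < (n : ℝ) * ((n : ℝ) - 1) := by nlinarith
    set c : ℝ := (n : ℝ) * ((n : ℝ) - 1) with hcdef
    have hcards : (s.card : ℝ) = c := by
      rw [hs, Finset.offDiag_card, Finset.card_range, hcdef]
      have h1 : n ≤ n * n := Nat.le_mul_of_pos_left n (by omega)
      push_cast [Nat.cast_sub h1]
      ring
    have hpt : ∀ ω, (∑ p ∈ s, g (X p.1 ω, X p.2 ω)) / c - μ = (∑ p ∈ s, h p ω) / c := by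
      intro ω
      have hsum : ∑ p ∈ s, h p ω = (∑ p ∈ s, g (X p.1 ω, X p.2 ω)) - c * μ := by
        rw [hhdef]
        rw [Finset.sum_sub_distrib, Finset.sum_const, nsmul_eq_mul, hcards]
      rw [hsum, sub_div, mul_div_cancel_left₀ μ hc0.ne']
    have hincl : {ω | ε ≤ dist ((∑ p ∈ s, g (X p.1 ω, X p.2 ω)) / c) μ}
        ⊆ {ω | ε^2 ≤ (∑ p ∈ s, h p ω)^2 / c^2} := by
      intro ω hω
      simp only [Set.mem_setOf_eq, Real.dist_eq] at hω ⊢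
      rw [hpt ω] at hω
      have h2 : ε^2 ≤ |(∑ p ∈ s, h p ω) / c|^2 := by
        have := abs_nonneg ((∑ p ∈ s, h p ω) / c)
        nlinarith
      calc ε^2 ≤ |(∑ p ∈ s, h p ω) / c|^2 := h2
        _ = (∑ p ∈ s, h p ω)^2 / c^2 := by rw [sq_abs, div_pow]
    have hintsq : Integrable (fun ω => (∑ p ∈ s, h p ω)^2 / c^2) P := by
      refine Integrable.div_const ?_ _
      refine my_integrable_of_bounded ?_ ((s.card : ℝ)^2) (fun ω => ?_)
      · exact (Finset.measurable_sum s (fun p _ => hmeash p)).pow_const 2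
      · have h1 : |∑ p ∈ s, h p ω| ≤ (s.card : ℝ) := by
          calc |∑ p ∈ s, h p ω| ≤ ∑ p ∈ s, |h p ω| := Finset.abs_sum_le_sum_abs _ _
            _ ≤ ∑ _p ∈ s, (1:ℝ) := Finset.sum_le_sum (fun p _ => habs p ω)
            _ = (s.card : ℝ) := by simp
        calc |(∑ p ∈ s, h p ω)^2| = |∑ p ∈ s, h p ω|^2 := by rw [abs_pow]
          _ ≤ (s.card : ℝ)^2 := by nlinarith [abs_nonneg (∑ p ∈ s, h p ω)]
    have hmark := mul_meas_ge_le_integral_of_nonneg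
      (Filter.Eventually.of_forall (fun ω => by positivity :
        ∀ ω, (0:ℝ) ≤ (∑ p ∈ s, h p ω)^2 / c^2)) hintsq (ε^2)
    have hintval : ∫ ω, (∑ p ∈ s, h p ω)^2 / c^2 ∂P ≤ 4 * (n:ℝ)^3 / c^2 := by
      rw [integral_div]
      exact (div_le_div_iff_of_pos_right (by positivity)).mpr (hvar n)
    have hε2 : (0:ℝ) < ε^2 := by positivity
    have h1 : (P {ω | ε^2 ≤ (∑ p ∈ s, h p ω)^2 / c^2}).toReal
        ≤ (4 * (n:ℝ)^3 / c^2) / ε^2 := by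
      rw [le_div_iff₀ hε2]
      calc (P {ω | ε^2 ≤ (∑ p ∈ s, h p ω)^2 / c^2}).toReal * ε^2
          = ε^2 * (P {ω | ε^2 ≤ (∑ p ∈ s, h p ω)^2 / c^2}).toReal := by ring
        _ ≤ ∫ ω, (∑ p ∈ s, h p ω)^2 / c^2 ∂P := hmark
        _ ≤ 4 * (n:ℝ)^3 / c^2 := hintval
    have h2 : (P {ω | ε ≤ dist ((∑ p ∈ s, g (X p.1 ω, X p.2 ω)) / c) μ}).toReal
        ≤ (P {ω | ε^2 ≤ (∑ p ∈ s, h p ω)^2 / c^2}).toReal :=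
      ENNReal.toReal_mono (measure_ne_top P _) (measure_mono hincl)
    have key2 : 4*(n:ℝ)^3 * n ≤ 16 * c^2 := by
      rw [hcdef]
      nlinarith [hn2, sq_nonneg ((n:ℝ) - 2), sq_nonneg (n:ℝ)]
    have hfinal : (4*(n:ℝ)^3/c^2)/ε^2 ≤ 16/(ε^2*(n:ℝ)) := by
      rw [div_div, div_le_div_iff₀ (by positivity) (by positivity)]
      calc 4*(n:ℝ)^3 * (ε^2*(n:ℝ)) = (4*(n:ℝ)^3*(n:ℝ)) * ε^2 := by ring
        _ ≤ (16*c^2) * ε^2 := mul_le_mul_of_nonneg_right key2 (sq_nonneg ε)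
        _ = 16*(c^2*ε^2) := by ring
    exact le_trans (le_trans h2 h1) hfinal
  have htoReal : Tendsto (fun n : ℕ =>
      (P {ω | ε ≤ dist ((∑ p ∈ (Finset.range n).offDiag, g (X p.1 ω, X p.2 ω))
        / ((n : ℝ) * ((n : ℝ) - 1))) μ}).toReal) atTop (𝓝 0) := by
    refine squeeze_zero' (Filter.Eventually.of_forall fun n => ENNReal.toReal_nonneg)
      (eventually_atTop.mpr ⟨2, hbound⟩) ?_
    have he : (fun n : ℕ => 16 / (ε^2 * (n:ℝ))) = fun n : ℕ => (16/ε^2) / (n:ℝ) := by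
      funext n; rw [div_div]
    rw [he]
    exact tendsto_const_div_atTop_nhds_zero_nat _
  have hcomp := (ENNReal.continuous_ofReal.tendsto 0).comp htoReal
  simp only [Function.comp_def, ENNReal.ofReal_toReal (measure_ne_top P _),
    ENNReal.ofReal_zero] at hcomp
  exact hcomp

end CIndexAux

/-- **Convergence in probability of the fixed-time Harrell's C-index.**
`ζ i = (Zᵢ, Tᵢ, Dᵢ)` is an i.i.d. sequence of (covariate, event time, censoring time)
triples with `D₁` independent of `(Z₁, T₁)` and `S` a fixed measurable predicted survival
curve with values in `[0,1]`.  Fix `t ≥ 0` and assume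
`P(T₁ < T₂, T₁ < min(D₁,D₂)) > 0`.  Then `Ĉ^har_n(t)` converges in probability to
`P(S(t;Z₁) < S(t;Z₂), T₁ < T₂, T₁ < min(D₁,D₂)) / P(T₁ < T₂, T₁ < min(D₁,D₂))`. -/
theorem stmt_14 {Ω : Type*} [MeasurableSpace Ω] (P : Measure Ω) [IsProbabilityMeasure P]
    {E : Type*} [MeasurableSpace E]
    (S : ℝ → E → ℝ) (hSmeas : Measurable fun p : ℝ × E => S p.1 p.2)
    (hS01 : ∀ s z, S s z ∈ Set.Icc (0 : ℝ) 1)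
    (ζ : ℕ → Ω → E × ℝ × ℝ)
    (hmeas : ∀ i, Measurable (ζ i))
    (hident : ∀ i, P.map (ζ i) = P.map (ζ 0))
    (hindep : iIndepFun ζ P)
    (hTnonneg : ∀ i ω, 0 ≤ (ζ i ω).2.1) (hDnonneg : ∀ i ω, 0 ≤ (ζ i ω).2.2)
    (hDindep : IndepFun (fun ω => ((ζ 0 ω).1, (ζ 0 ω).2.1)) (fun ω => (ζ 0 ω).2.2) P)
    (t : ℝ) (ht : 0 ≤ t)
    (hpos : 0 < P {ω | (ζ 0 ω).2.1 < (ζ 1 ω).2.1 ∧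
        (ζ 0 ω).2.1 < min ((ζ 0 ω).2.2) ((ζ 1 ω).2.2)}) :
    TendstoInMeasure P
      (fun n ω =>
        (∑ i ∈ Finset.range n, ∑ j ∈ Finset.range n,
          if i ≠ j ∧ (ζ i ω).2.1 < (ζ i ω).2.2 ∧
              S t ((ζ i ω).1) < S t ((ζ j ω).1) ∧
              (ζ i ω).2.1 < min ((ζ j ω).2.1) ((ζ j ω).2.2)
            then (1 : ℝ) else 0) /
        (∑ i ∈ Finset.range n, ∑ j ∈ Finset.range n,
          if i ≠ j ∧ (ζ i ω).2.1 < (ζ i ω).2.2 ∧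
              (ζ i ω).2.1 < min ((ζ j ω).2.1) ((ζ j ω).2.2)
            then (1 : ℝ) else 0))
      atTop
      (fun _ =>
        (P {ω | S t ((ζ 0 ω).1) < S t ((ζ 1 ω).1) ∧ (ζ 0 ω).2.1 < (ζ 1 ω).2.1 ∧
            (ζ 0 ω).2.1 < min ((ζ 0 ω).2.2) ((ζ 1 ω).2.2)}).toReal /
        (P {ω | (ζ 0 ω).2.1 < (ζ 1 ω).2.1 ∧
            (ζ 0 ω).2.1 < min ((ζ 0 ω).2.2) ((ζ 1 ω).2.2)}).toReal) := by
  classical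
  have hSt : Measurable (fun z : E => S t z) :=
    hSmeas.comp (measurable_const.prodMk measurable_id)
  set M1 : Set ((E × ℝ × ℝ) × (E × ℝ × ℝ)) :=
    {p | p.1.2.1 < p.1.2.2 ∧ S t p.1.1 < S t p.2.1 ∧ p.1.2.1 < min p.2.2.1 p.2.2.2}
    with hM1def
  set M2 : Set ((E × ℝ × ℝ) × (E × ℝ × ℝ)) :=
    {p | p.1.2.1 < p.1.2.2 ∧ p.1.2.1 < min p.2.2.1 p.2.2.2} with hM2def
  have hM1 : MeasurableSet M1 := by
    rw [hM1def]
    refine MeasurableSet.inter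
      (measurableSet_lt (measurable_fst.snd.fst) (measurable_fst.snd.snd))
      (MeasurableSet.inter
        (measurableSet_lt (hSt.comp measurable_fst.fst) (hSt.comp measurable_snd.fst))
        (measurableSet_lt (measurable_fst.snd.fst)
          ((measurable_snd.snd.fst).min (measurable_snd.snd.snd))))
  have hM2 : MeasurableSet M2 := by
    rw [hM2def]
    exact MeasurableSet.inter
      (measurableSet_lt (measurable_fst.snd.fst) (measurable_fst.snd.snd))
      (measurableSet_lt (measurable_fst.snd.fst)
        ((measurable_snd.snd.fst).min (measurable_snd.snd.snd)))
  set g1 : (E × ℝ × ℝ) × (E × ℝ × ℝ) → ℝ := fun p => if p ∈ M1 then 1 else 0 with hg1def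
  set g2 : (E × ℝ × ℝ) × (E × ℝ × ℝ) → ℝ := fun p => if p ∈ M2 then 1 else 0 with hg2def
  have hg1m : Measurable g1 := Measurable.ite hM1 measurable_const measurable_const
  have hg2m : Measurable g2 := Measurable.ite hM2 measurable_const measurable_const
  have hg10 : ∀ p, 0 ≤ g1 p := by intro p; rw [hg1def]; dsimp only; split <;> norm_num
  have hg11 : ∀ p, g1 p ≤ 1 := by intro p; rw [hg1def]; dsimp only; split <;> norm_num
  have hg20 : ∀ p, 0 ≤ g2 p := by intro p; rw [hg2def]; dsimp only; split <;> norm_num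
  have hg21 : ∀ p, g2 p ≤ 1 := by intro p; rw [hg2def]; dsimp only; split <;> norm_num
  -- identify the limiting integrals with the probabilities in the statement
  have hind : ∀ (M : Set ((E × ℝ × ℝ) × (E × ℝ × ℝ))), MeasurableSet M →
      ∀ G : ((E × ℝ × ℝ) × (E × ℝ × ℝ)) → ℝ,
      (∀ p, (p ∈ M → G p = 1) ∧ (p ∉ M → G p = 0)) →
      ∫ ω, G (ζ 0 ω, ζ 1 ω) ∂P = (P {ω | (ζ 0 ω, ζ 1 ω) ∈ M}).toReal := by
    intro M hM G hG
    have hpre : MeasurableSet {ω | (ζ 0 ω, ζ 1 ω) ∈ M} :=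
      ((hmeas 0).prodMk (hmeas 1)) hM
    have heq : (fun ω => G (ζ 0 ω, ζ 1 ω))
        = Set.indicator {ω | (ζ 0 ω, ζ 1 ω) ∈ M} (fun _ => (1:ℝ)) := by
      funext ω
      by_cases hω : (ζ 0 ω, ζ 1 ω) ∈ M
      · rw [Set.indicator_of_mem (show ω ∈ {ω | (ζ 0 ω, ζ 1 ω) ∈ M} from hω)]
        exact (hG _).1 hω
      · rw [Set.indicator_of_notMem (show ω ∉ {ω | (ζ 0 ω, ζ 1 ω) ∈ M} from hω)]
        exact (hG _).2 hω
    rw [heq, integral_indicator_const (1:ℝ) hpre, smul_eq_mul, mul_one, measureReal_def]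
  have hset1 : {ω | (ζ 0 ω, ζ 1 ω) ∈ M1}
      = {ω | S t ((ζ 0 ω).1) < S t ((ζ 1 ω).1) ∧ (ζ 0 ω).2.1 < (ζ 1 ω).2.1 ∧
          (ζ 0 ω).2.1 < min ((ζ 0 ω).2.2) ((ζ 1 ω).2.2)} := by
    ext ω
    simp only [hM1def, Set.mem_setOf_eq, lt_min_iff]
    tauto
  have hset2 : {ω | (ζ 0 ω, ζ 1 ω) ∈ M2}
      = {ω | (ζ 0 ω).2.1 < (ζ 1 ω).2.1 ∧
          (ζ 0 ω).2.1 < min ((ζ 0 ω).2.2) ((ζ 1 ω).2.2)} := by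
    ext ω
    simp only [hM2def, Set.mem_setOf_eq, lt_min_iff]
    tauto
  have hI1 : ∫ ω, g1 (ζ 0 ω, ζ 1 ω) ∂P
      = (P {ω | S t ((ζ 0 ω).1) < S t ((ζ 1 ω).1) ∧ (ζ 0 ω).2.1 < (ζ 1 ω).2.1 ∧
          (ζ 0 ω).2.1 < min ((ζ 0 ω).2.2) ((ζ 1 ω).2.2)}).toReal := by
    have h2 := hind M1 hM1 g1 (fun p => ⟨fun h => if_pos h, fun h => if_neg h⟩)
    rw [hset1] at h2
    exact h2
  have hI2 : ∫ ω, g2 (ζ 0 ω, ζ 1 ω) ∂P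
      = (P {ω | (ζ 0 ω).2.1 < (ζ 1 ω).2.1 ∧
          (ζ 0 ω).2.1 < min ((ζ 0 ω).2.2) ((ζ 1 ω).2.2)}).toReal := by
    have h2 := hind M2 hM2 g2 (fun p => ⟨fun h => if_pos h, fun h => if_neg h⟩)
    rw [hset2] at h2
    exact h2
  have hbne : ∫ ω, g2 (ζ 0 ω, ζ 1 ω) ∂P ≠ 0 := by
    rw [hI2]
    exact (ENNReal.toReal_pos (ne_of_gt hpos) (measure_ne_top P _)).ne'
  -- the два U-statistic limits
  have main1 := my_ustat_tendstoInMeasure (P := P) ζ hmeas hident hindep g1 hg1m hg10 hg11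
  have main2 := my_ustat_tendstoInMeasure (P := P) ζ hmeas hident hindep g2 hg2m hg20 hg21
  have hdiv := my_tendstoInMeasure_div main1 main2 hbne
  rw [hI1, hI2] at hdiv
  -- convert the normalized ratio back to the raw ratio of double sums
  refine TendstoInMeasure.congr
    (fun n => Filter.Eventually.of_forall (fun ω => ?_))
    (Filter.Eventually.of_forall (fun ω => rfl)) hdiv
  beta_reduce
  have hN : (∑ i ∈ Finset.range n, ∑ j ∈ Finset.range n,
        if i ≠ j ∧ (ζ i ω).2.1 < (ζ i ω).2.2 ∧
            S t ((ζ i ω).1) < S t ((ζ j ω).1) ∧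
            (ζ i ω).2.1 < min ((ζ j ω).2.1) ((ζ j ω).2.2)
          then (1 : ℝ) else 0)
      = ∑ p ∈ (Finset.range n).offDiag, g1 (ζ p.1 ω, ζ p.2 ω) := by
    rw [← Finset.sum_product', (show (Finset.range n).offDiag = (Finset.range n ×ˢ Finset.range n).filter (fun a : ℕ × ℕ => a.1 ≠ a.2) by ext x; simp [Finset.mem_offDiag, and_assoc]), Finset.sum_filter]
    refine Finset.sum_congr rfl fun p _ => ?_
    by_cases h1 : p.1 = p.2
    · simp [h1]
    · rw [if_pos h1]
      have e1 : (p.1 ≠ p.2 ∧ ((ζ p.1 ω).2.1 < (ζ p.1 ω).2.2 ∧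
          S t ((ζ p.1 ω).1) < S t ((ζ p.2 ω).1) ∧
          (ζ p.1 ω).2.1 < min ((ζ p.2 ω).2.1) ((ζ p.2 ω).2.2))) ↔
          ((ζ p.1 ω).2.1 < (ζ p.1 ω).2.2 ∧
          S t ((ζ p.1 ω).1) < S t ((ζ p.2 ω).1) ∧
          (ζ p.1 ω).2.1 < min ((ζ p.2 ω).2.1) ((ζ p.2 ω).2.2)) := and_iff_right h1
      rw [if_congr e1 rfl rfl]
      exact if_congr Iff.rfl rfl rfl
  have hD : (∑ i ∈ Finset.range n, ∑ j ∈ Finset.range n,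
        if i ≠ j ∧ (ζ i ω).2.1 < (ζ i ω).2.2 ∧
            (ζ i ω).2.1 < min ((ζ j ω).2.1) ((ζ j ω).2.2)
          then (1 : ℝ) else 0)
      = ∑ p ∈ (Finset.range n).offDiag, g2 (ζ p.1 ω, ζ p.2 ω) := by
    rw [← Finset.sum_product', (show (Finset.range n).offDiag = (Finset.range n ×ˢ Finset.range n).filter (fun a : ℕ × ℕ => a.1 ≠ a.2) by ext x; simp [Finset.mem_offDiag, and_assoc]), Finset.sum_filter]
    refine Finset.sum_congr rfl fun p _ => ?_
    by_cases h1 : p.1 = p.2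
    · simp [h1]
    · rw [if_pos h1]
      have e1 : (p.1 ≠ p.2 ∧ ((ζ p.1 ω).2.1 < (ζ p.1 ω).2.2 ∧
          (ζ p.1 ω).2.1 < min ((ζ p.2 ω).2.1) ((ζ p.2 ω).2.2))) ↔
          ((ζ p.1 ω).2.1 < (ζ p.1 ω).2.2 ∧
          (ζ p.1 ω).2.1 < min ((ζ p.2 ω).2.1) ((ζ p.2 ω).2.2)) := and_iff_right h1
      rw [if_congr e1 rfl rfl]
      exact if_congr Iff.rfl rfl rfl
  rw [hN, hD]
  rcases Nat.lt_or_ge n 2 with hn | hn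
  · interval_cases n <;> simp
  · have h2r : (2:ℝ) ≤ (n:ℝ) := by exact_mod_cast hn
    have hc : ((n:ℝ) * ((n:ℝ) - 1)) ≠ 0 := by nlinarith
    exact div_div_div_cancel_right₀ hc _ _
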